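/- 𝒰 is a P-point ultrafilter on ℕ if and only if the natural embedding of D (Cauchy sequences modulo 𝒰-equivalence) into the ultrapower ℝ^ℕ/𝒰 is a ring isomorphism onto the subring of finite hyperreals, with the limit map sh on D corresponding to the standard part. -/

import Mathlib

open Filter Topology

/-- `D`: the ring of Cauchy (= convergent) real sequences modulo `𝒰`-equivalence
(`u ~ v` iff `{i | u i = v i} ∈ 𝒰`), realized as a subring of the ultrapower
`ℝ^ℕ/𝒰` (two sequences are `𝒰`-equivalent iff they have the same germ). -/
noncomputable def D (U : Ultrafilter ℕ) : Subring ((U : Filter ℕ).Germ ℝ) where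
  carrier := {x | ∃ f : ℕ → ℝ, CauchySeq f ∧ x = (f : (U : Filter ℕ).Germ ℝ)}
  zero_mem' := ⟨fun _ => 0, cauchySeq_const 0, rfl⟩
  one_mem' := ⟨fun _ => 1, cauchySeq_const 1, rfl⟩
  add_mem' := by
    rintro x y ⟨f, hf, rfl⟩ ⟨g, hg, rfl⟩
    exact ⟨f + g, hf.add hg, rfl⟩
  neg_mem' := by
    rintro x ⟨f, hf, rfl⟩
    exact ⟨-f, hf.neg, rfl⟩
  mul_mem' := by
    rintro x y ⟨f, hf, rfl⟩ ⟨g, hg, rfl⟩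
    obtain ⟨a, ha⟩ := cauchySeq_tendsto_of_complete hf
    obtain ⟨b, hb⟩ := cauchySeq_tendsto_of_complete hg
    exact ⟨f * g, (ha.mul hb).cauchySeq, rfl⟩

/-- A nonprincipal ultrafilter `𝒰` is a P-point if for every partition of `ℕ` into
`𝒰`-negligible sets there is a set in `𝒰` meeting each piece in a finite set. -/
def IsPPoint (U : Ultrafilter ℕ) : Prop :=
  ∀ c : ℕ → Set ℕ, Pairwise (Function.onFun Disjoint c) → (⋃ n, c n) = Set.univ →
    (∀ n, c n ∉ U) → ∃ A ∈ U, ∀ n, (A ∩ c n).Finite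

/-- A bounded sequence is `𝒰`-equivalent to a convergent one, if `𝒰` is a P-point. -/
lemma bounded_equiv_cauchy (U : Ultrafilter ℕ) (hP : IsPPoint U)
    (g : ℕ → ℝ) (R : ℝ) (hg : ∀ i, |g i| ≤ R) :
    ∃ h : ℕ → ℝ, CauchySeq h ∧ (g : (U : Filter ℕ).Germ ℝ) = (h : (U : Filter ℕ).Germ ℝ) := by
  classical
  -- the `𝒰`-limit `L`
  have hmem : (↑(U.map g) : Filter ℝ) ≤ 𝓟 (Set.Icc (-R) R) := by
    rw [Ultrafilter.coe_map]
    exact tendsto_principal.2 (Eventually.of_forall fun i => abs_le.1 (hg i))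
  obtain ⟨L, -, hL⟩ := isCompact_Icc.ultrafilter_le_nhds (U.map g) hmem
  rw [Ultrafilter.coe_map] at hL
  have hLt : Tendsto g (U : Filter ℕ) (𝓝 L) := hL
  by_cases h0 : {i | g i = L} ∈ U
  · exact ⟨fun _ => L, cauchySeq_const L, Germ.coe_eq.2 h0⟩
  -- sets where `g` is close to `L`
  set B : ℕ → Set ℕ := fun n => {i | |g i - L| < 1 / (n + 1)} with hBdef
  have hB : ∀ n, B n ∈ U := by
    intro n
    have : (0 : ℝ) < 1 / (n + 1) := by positivity
    have h2 := Metric.tendsto_nhds.1 hLt _ this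
    have h3 : ∀ᶠ i in (U : Filter ℕ), |g i - L| < 1 / (n + 1) := by
      simpa [Real.dist_eq, one_div] using h2
    rw [hBdef]
    exact eventually_iff.1 h3
  have hBanti : ∀ {m n : ℕ}, m ≤ n → B n ⊆ B m := by
    intro m n hmn i hi
    simp only [hBdef, Set.mem_setOf_eq] at hi ⊢
    refine lt_of_lt_of_le hi ?_
    apply one_div_le_one_div_of_le (by positivity)
    exact_mod_cast Nat.add_le_add_right hmn 1
  -- the partition
  set c : ℕ → Set ℕ := fun n =>
    Nat.rec ((B 0)ᶜ ∪ {i | g i = L}) (fun n _ => B n \ B (n + 1)) n with hcdef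
  have hc0 : c 0 = (B 0)ᶜ ∪ {i | g i = L} := rfl
  have hcs : ∀ n, c (n + 1) = B n \ B (n + 1) := fun _ => rfl
  have hgl_mem : ∀ {i n}, g i = L → i ∈ B n := by
    intro i n hi
    simp only [hBdef, Set.mem_setOf_eq, hi, sub_self, abs_zero]
    positivity
  -- key: locating an index in the partition
  have key : ∀ i n, g i ≠ L → i ∉ B n → ∃ k ≤ n, i ∈ c k := by
    intro i n hne hnB
    by_cases hB0 : i ∈ B 0
    · have hex : ∃ m, i ∉ B m := ⟨n, hnB⟩
      have hkpos : Nat.find hex ≠ 0 := fun h => (h ▸ Nat.find_spec hex) hB0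
      obtain ⟨m, hm⟩ := Nat.exists_eq_succ_of_ne_zero hkpos
      have hks : i ∉ B (m + 1) := by
        have h5 := Nat.find_spec hex
        rwa [hm] at h5
      have hmB : i ∈ B m := by
        by_contra hmB
        exact Nat.find_min hex (by omega) hmB
      have hle : Nat.find hex ≤ n := Nat.find_min' hex hnB
      exact ⟨m + 1, by omega, by rw [hcs]; exact ⟨hmB, hks⟩⟩
    · exact ⟨0, Nat.zero_le _, by rw [hc0]; exact Or.inl hB0⟩
  -- partition properties
  have hdisj : Pairwise (Function.onFun Disjoint c) := by
    have haux : ∀ m n, m < n → Disjoint (c m) (c n) := by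
      intro m n hmn
      rw [Set.disjoint_left]
      intro i him hin
      cases n with
      | zero => exact absurd hmn (Nat.not_lt_zero m)
      | succ n =>
      rw [hcs] at hin
      cases m with
      | zero =>
        rw [hc0] at him
        rcases him with him | him
        · exact him (hBanti (Nat.zero_le n) hin.1)
        · exact hin.2 (hgl_mem him)
      | succ m =>
        rw [hcs] at him
        exact him.2 (hBanti (Nat.succ_le_of_lt (Nat.lt_of_succ_lt_succ hmn)) hin.1)
    intro m n hmn
    rcases lt_or_gt_of_ne hmn with h | h
    · exact haux m n h
    · exact (haux n m h).symm
  have hcover : (⋃ n, c n) = Set.univ := by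
    refine Set.eq_univ_of_forall fun i => Set.mem_iUnion.2 ?_
    by_cases hgi : g i = L
    · exact ⟨0, by rw [hc0]; exact Or.inr hgi⟩
    · have hpos : 0 < |g i - L| := abs_pos.2 (sub_ne_zero.2 hgi)
      obtain ⟨n, hn⟩ := exists_nat_one_div_lt hpos
      have hnB : i ∉ B n := fun h => absurd h (by simp only [hBdef, Set.mem_setOf_eq]; linarith)
      obtain ⟨k, -, hk⟩ := key i n hgi hnB
      exact ⟨k, hk⟩
  have hnotU : ∀ n, c n ∉ U := by
    intro n
    cases n with
    | zero =>
      rw [hc0, Ultrafilter.union_mem_iff]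
      rintro (h | h)
      · exact (Ultrafilter.compl_mem_iff_notMem.1 h) (hB 0)
      · exact h0 h
    | succ n =>
      rw [hcs]
      intro h
      have := U.toFilter.inter_mem h (hB (n + 1))
      rw [Set.diff_eq, Set.inter_assoc, Set.compl_inter_self, Set.inter_empty] at this
      exact (Filter.empty_notMem _) this
  obtain ⟨A, hA, hAfin⟩ := hP c hdisj hcover hnotU
  refine ⟨fun i => if i ∈ A then g i else L, ?_, ?_⟩
  · -- convergent to L
    refine Filter.Tendsto.cauchySeq (x := L) ?_
    rw [← Nat.cofinite_eq_atTop]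
    refine Metric.tendsto_nhds.2 fun ε hε => ?_
    obtain ⟨n, hn⟩ := exists_nat_one_div_lt hε
    rw [Filter.eventually_cofinite]
    refine Set.Finite.subset (Set.Finite.biUnion (Set.finite_Iic n) fun k _ => hAfin k) ?_
    intro i hi
    simp only [Set.mem_setOf_eq, not_lt] at hi
    by_cases hiA : i ∈ A
    · simp only [if_pos hiA, Real.dist_eq] at hi
      have hne : g i ≠ L := by
        intro h; rw [h, sub_self, abs_zero] at hi; linarith
      have hnB : i ∉ B n := by
        intro h
        simp only [hBdef, Set.mem_setOf_eq] at h
        linarith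
      obtain ⟨k, hkn, hk⟩ := key i n hne hnB
      exact Set.mem_biUnion hkn ⟨hiA, hk⟩
    · simp only [if_neg hiA, Real.dist_eq, sub_self, abs_zero] at hi
      linarith
  · exact Germ.coe_eq.2 (Filter.mem_of_superset hA fun i hi => by simp [hi])

/-- `𝒰` is a P-point iff the natural embedding of `D` into the ultrapower `ℝ^ℕ/𝒰`
is an isomorphism onto the subring of finite hyperreals, the limit map `sh`
corresponding to the standard part (every Cauchy sequence is infinitely close to
its limit). -/
theorem ppoint_iff_D_is_finite_part (U : Ultrafilter ℕ)
    (hU : ∀ i : ℕ, U ≠ pure i) :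
    IsPPoint U ↔
      (((D U : Set ((U : Filter ℕ).Germ ℝ))) =
          {x : (U : Filter ℕ).Germ ℝ | ∃ r : ℝ, |x| ≤ (r : (U : Filter ℕ).Germ ℝ)} ∧
        ∀ (f : ℕ → ℝ) (L : ℝ), CauchySeq f → Tendsto f atTop (nhds L) →
          ∀ ε : ℝ, 0 < ε →
            |(f : (U : Filter ℕ).Germ ℝ) - (L : (U : Filter ℕ).Germ ℝ)| <
              (ε : (U : Filter ℕ).Germ ℝ)) := by
    classical
  have hcof : (U : Filter ℕ) ≤ cofinite := by
    rcases U.le_cofinite_or_eq_pure with h | ⟨a, ha⟩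
    · exact h
    · exact absurd ha (hU a)
  have hatTop : (U : Filter ℕ) ≤ atTop := Nat.cofinite_eq_atTop ▸ hcof
  constructor
  · intro hP
    constructor
    · ext x
      simp only [SetLike.mem_coe, Set.mem_setOf_eq]
      constructor
      · rintro ⟨f, hf, rfl⟩
        obtain ⟨R, -, hR⟩ := cauchySeq_bdd hf
        refine ⟨R + |f 0|, ?_⟩
        rw [Germ.abs_def, Germ.map_coe]
        refine Germ.coe_le.2 (Eventually.of_forall fun i => ?_)
        calc |f i| ≤ |f i - f 0| + |f 0| := by
              have := abs_sub_abs_le_abs_sub (f i) (f 0); linarith [abs_nonneg (f 0)]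
          _ ≤ R + |f 0| := by
              have := hR i 0; rw [Real.dist_eq] at this; linarith
      · rintro ⟨r, hr⟩
        induction x using Germ.inductionOn with
        | h f =>
          rw [Germ.abs_def, Germ.map_coe] at hr
          have hr' : ∀ᶠ i in (U : Filter ℕ), |f i| ≤ r := Germ.coe_le.1 hr
          set f' : ℕ → ℝ := fun i => if |f i| ≤ r then f i else 0 with hf'def
          have hbd : ∀ i, |f' i| ≤ max r 0 := by
            intro i
            by_cases h : |f i| ≤ r
            · simp only [hf'def, if_pos h]; exact le_trans h (le_max_left _ _)
            · simp only [hf'def, if_neg h, abs_zero]; exact le_max_right _ _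
          obtain ⟨h, hhC, hh⟩ := bounded_equiv_cauchy U hP f' (max r 0) hbd
          refine ⟨h, hhC, ?_⟩
          rw [← hh]
          exact Germ.coe_eq.2 (hr'.mono fun i hi => by simp [hf'def, if_pos hi])
    · intro f L hf hL ε hε
      have : (f : (U : Filter ℕ).Germ ℝ) - (L : (U : Filter ℕ).Germ ℝ) =
          ((fun i => f i - L : ℕ → ℝ) : (U : Filter ℕ).Germ ℝ) := rfl
      rw [this, Germ.abs_def, Germ.map_coe]
      refine Germ.coe_lt.2 (hatTop ?_)
      have := Metric.tendsto_atTop.1 hL ε hε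
      obtain ⟨N, hN⟩ := this
      filter_upwards [Filter.eventually_ge_atTop N] with i hi
      have := hN i hi
      rwa [Real.dist_eq] at this
  · rintro ⟨hset, -⟩ c hdisj hcover hnotU
    have hex : ∀ i, ∃ n, i ∈ c n := fun i =>
      Set.mem_iUnion.1 (hcover ▸ (Set.mem_univ i) : i ∈ ⋃ n, c n)
    set ν : ℕ → ℕ := fun i => (hex i).choose with hνdef
    have hν : ∀ i, i ∈ c (ν i) := fun i => (hex i).choose_spec
    have huniq : ∀ i n, i ∈ c n → ν i = n := by
      intro i n hin
      by_contra hne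
      exact Set.disjoint_left.1 (hdisj hne) (hν i) hin
    set f : ℕ → ℝ := fun i => 1 / ((ν i : ℝ) + 1) with hfdef
    have hfpos : ∀ i, 0 < f i := fun i => by positivity
    have hfle : ∀ i, f i ≤ 1 := by
      intro i
      rw [hfdef]
      rw [div_le_one (by positivity)]
      simp
    have hfD : (f : (U : Filter ℕ).Germ ℝ) ∈ (D U : Set ((U : Filter ℕ).Germ ℝ)) := by
      rw [hset]
      refine ⟨1, ?_⟩
      rw [Germ.abs_def, Germ.map_coe]
      exact Germ.coe_le.2 (Eventually.of_forall fun i => by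
        simp only [Function.comp_apply, abs_of_pos (hfpos i)]; exact hfle i)
    obtain ⟨g, hgC, hgf⟩ := hfD
    obtain ⟨L, hgL⟩ := cauchySeq_tendsto_of_complete hgC
    have hfg : ∀ᶠ i in (U : Filter ℕ), f i = g i := Germ.coe_eq.1 hgf
    -- f tends to 0 along U
    have hf0 : Tendsto f (U : Filter ℕ) (𝓝 0) := by
      refine Metric.tendsto_nhds.2 fun ε hε => ?_
      obtain ⟨n, hn⟩ := exists_nat_one_div_lt hε
      have hbig : {i | n ≤ ν i} ∈ U := by
        have hU' : (⋃ k ∈ Set.Iio n, c k) ∉ U := by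
          intro h
          obtain ⟨k, -, hk⟩ := (Ultrafilter.finite_biUnion_mem_iff (Set.finite_Iio n)).1 h
          exact hnotU k hk
        refine Filter.mem_of_superset (Ultrafilter.compl_mem_iff_notMem.2 hU') ?_
        intro i hi
        simp only [Set.mem_compl_iff, Set.mem_iUnion, exists_prop, not_exists, not_and,
          Set.mem_Iio] at hi
        simp only [Set.mem_setOf_eq]
        by_contra hlt
        push_neg at hlt
        exact hi (ν i) hlt (hν i)
      refine Filter.mem_of_superset hbig fun i hi => ?_
      simp only [Set.mem_setOf_eq, Real.dist_eq, sub_zero, abs_of_pos (hfpos i)]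
      calc f i = 1 / ((ν i : ℝ) + 1) := rfl
        _ ≤ 1 / ((n : ℝ) + 1) := by
            apply one_div_le_one_div_of_le (by positivity)
            exact_mod_cast Nat.add_le_add_right hi 1
        _ < ε := hn
    have hg0 : Tendsto g (U : Filter ℕ) (𝓝 0) := hf0.congr' hfg
    have hgL' : Tendsto g (U : Filter ℕ) (𝓝 L) := hgL.mono_left hatTop
    have hL0 : L = 0 := tendsto_nhds_unique hgL' hg0
    refine ⟨{i | f i = g i}, hfg, fun n => ?_⟩
    have hfin : {i | ¬ dist (g i) L < 1 / ((n : ℝ) + 1)}.Finite := by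
      have := Metric.tendsto_atTop.1 hgL (1 / ((n : ℝ) + 1)) (by positivity)
      obtain ⟨N, hN⟩ := this
      refine Set.Finite.subset (Set.finite_Iio N) fun i hi => ?_
      simp only [Set.mem_setOf_eq] at hi
      by_contra h
      simp only [Set.mem_Iio, not_lt] at h
      exact hi (hN i h)
    refine hfin.subset fun i hi => ?_
    obtain ⟨hif, hic⟩ := hi
    have hνi : ν i = n := huniq i n hic
    simp only [Set.mem_setOf_eq, not_lt, hL0, Real.dist_eq, sub_zero]
    have : g i = 1 / ((n : ℝ) + 1) := by
      rw [← hif, hfdef]; simp [hνi]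
    rw [this, abs_of_pos (by positivity)]
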